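/- Let A and V be bounded self-adjoint operators on a Hilbert space H, B = A + V, and P an orthogonal projection commuting with A such that P V P = 0 and (I−P) V (I−P) = 0. Let A₀ and A₁ be the parts (restrictions) of A to its invariant subspaces Ran P and Ran(I−P), respectively. Then inf spec(A) − δ_V^ℓ ≤ inf spec(B) ≤ inf spec(A) and sup spec(A) ≤ sup spec(B) ≤ sup spec(A) + δ_V^r, where δ_V^ℓ = ‖V‖·tan((1/2)·arctan(2‖V‖/|inf spec(A₁) − inf spec(A₀)|)) and δ_V^r = ‖V‖·tan((1/2)·arctan(2‖V‖/|sup spec(A₁) − sup spec(A₀)|)), with the convention arctan(+∞) = π/2 (so δ = ‖V‖·tan(π/4) = ‖V‖) when the corresponding denominator vanishes. -/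

import Mathlib

open ContinuousLinearMap RCLike
open scoped InnerProductSpace

set_option linter.unusedSectionVars false
set_option linter.unusedVariables false
set_option maxHeartbeats 1000000

section Numeric

lemma aux_tan_half_arctan {t : ℝ} (ht : 0 ≤ t) :
    Real.tan (Real.arctan t / 2) = t / (1 + Real.sqrt (1 + t ^ 2)) := by
  set s := Real.sqrt (1 + t ^ 2) with hs_def
  have hs : s ^ 2 = 1 + t ^ 2 := Real.sq_sqrt (by positivity)
  have hs1 : 1 ≤ s := by
    rw [hs_def]
    nlinarith [Real.sq_sqrt (show (0:ℝ) ≤ 1 + t^2 by positivity),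
      Real.sqrt_nonneg (1 + t^2)]
  have hts : t ≤ s := by nlinarith [Real.sqrt_nonneg (1 + t^2)]
  set u := t / (1 + s) with hu_def
  have h1s : (0:ℝ) < 1 + s := by linarith
  have hu0 : 0 ≤ u := by positivity
  have hu1 : u < 1 := by rw [hu_def, div_lt_one h1s]; linarith
  have key : Real.tan (2 * Real.arctan u) = t := by
    rw [Real.tan_two_mul, Real.tan_arctan, hu_def]
    have h2 : 1 - (t / (1 + s)) ^ 2 = 2 / (1 + s) := by
      field_simp
      nlinarith [hs]
    rw [h2]
    field_simp
  have h2 : Real.arctan t = 2 * Real.arctan u := by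
    rw [← key, Real.arctan_tan]
    · have h3 : Real.arctan 0 ≤ Real.arctan u := Real.arctan_strictMono.monotone hu0
      rw [Real.arctan_zero] at h3
      nlinarith [Real.pi_pos]
    · have h4 := Real.arctan_strictMono hu1
      rw [Real.arctan_one] at h4
      linarith
  have h5 : (2 * Real.arctan u) / 2 = Real.arctan u := by ring
  rw [h2, h5, Real.tan_arctan]

lemma aux_delta_closed (v m0 m1 δ : ℝ) (hv : 0 ≤ v)
    (hδ : δ = if m1 = m0 then v else v * Real.tan (Real.arctan (2 * v / |m1 - m0|) / 2)) :
    δ = Real.sqrt ((|m1 - m0| / 2) ^ 2 + v ^ 2) - |m1 - m0| / 2 := by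
  by_cases h : m1 = m0
  · simp [h, hδ, Real.sqrt_sq hv]
  · rw [if_neg h] at hδ
    have hd : 0 < |m1 - m0| := abs_pos.mpr (sub_ne_zero.mpr h)
    set d := |m1 - m0| / 2 with hd_def
    have hd0 : 0 < d := by positivity
    have harg : 2 * v / |m1 - m0| = v / d := by rw [hd_def]; field_simp
    rw [harg, aux_tan_half_arctan (by positivity)] at hδ
    have hS : Real.sqrt (1 + (v / d) ^ 2) = Real.sqrt (d ^ 2 + v ^ 2) / d := by
      rw [eq_div_iff hd0.ne', ← Real.sqrt_sq hd0.le, ← Real.sqrt_mul (by positivity)]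
      congr 1
      field_simp
      exact (Real.sq_sqrt (by positivity)).symm
    rw [hS] at hδ
    set S := Real.sqrt (d ^ 2 + v ^ 2) with hS_def
    have hS2 : S ^ 2 = d ^ 2 + v ^ 2 := Real.sq_sqrt (by positivity)
    have hSd : d ≤ S := by nlinarith [Real.sqrt_nonneg (d^2+v^2)]
    have hSd0 : 0 < S + d := by linarith
    rw [hδ, eq_sub_iff_add_eq]
    field_simp
    rw [div_add' _ _ _ (by linarith), div_eq_iff (by linarith)]
    nlinarith [hS2]

lemma aux_quad_core (a b v t s : ℝ) (hv : 0 ≤ v) (ht : 0 ≤ t) (hs : 0 ≤ s) (hab : a ≤ b) :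
    (a - (Real.sqrt (((b - a) / 2) ^ 2 + v ^ 2) - (b - a) / 2)) * (t ^ 2 + s ^ 2)
      ≤ a * t ^ 2 + b * s ^ 2 - 2 * v * t * s := by
  set d := (b - a) / 2 with hd_def
  have hd0 : 0 ≤ d := by rw [hd_def]; linarith
  set S := Real.sqrt (d ^ 2 + v ^ 2) with hS_def
  have hS2 : S ^ 2 = d ^ 2 + v ^ 2 := Real.sq_sqrt (by positivity)
  have hSd : d ≤ S := by nlinarith [Real.sqrt_nonneg (d^2+v^2)]
  set δ := S - d with hδ_def
  have hδ0 : 0 ≤ δ := by linarith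
  have hkey : δ * (δ + 2 * d) = v ^ 2 := by rw [hδ_def]; nlinarith [hS2]
  have hb : b = a + 2 * d := by rw [hd_def]; ring
  rw [hb]
  rcases eq_or_lt_of_le hδ0 with h0 | h0
  · have hv0 : v = 0 := by nlinarith
    rw [hv0, ← h0]
    nlinarith [sq_nonneg s]
  · have h1 : 0 ≤ δ * t ^ 2 - 2 * v * t * s + (2 * d + δ) * s ^ 2 := by
      have := sq_nonneg (δ * t - v * s)
      have h2 : δ * (δ * t ^ 2 - 2 * v * t * s + (2 * d + δ) * s ^ 2) = (δ * t - v * s) ^ 2 := by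
        nlinarith [hkey]
      nlinarith
    nlinarith

lemma aux_quad_bound (m0 m1 v t s : ℝ) (hv : 0 ≤ v) (ht : 0 ≤ t) (hs : 0 ≤ s) :
    (min m0 m1 - (Real.sqrt ((|m1 - m0| / 2) ^ 2 + v ^ 2) - |m1 - m0| / 2)) * (t ^ 2 + s ^ 2)
      ≤ m0 * t ^ 2 + m1 * s ^ 2 - 2 * v * t * s := by
  rcases le_total m0 m1 with h | h
  · rw [min_eq_left h, abs_of_nonneg (by linarith : (0:ℝ) ≤ m1 - m0)]
    exact aux_quad_core m0 m1 v t s hv ht hs h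
  · rw [min_eq_right h, abs_of_nonpos (by linarith : m1 - m0 ≤ 0)]
    have := aux_quad_core m1 m0 v s t hv hs ht h
    have he : -(m1 - m0) = m0 - m1 := by ring
    rw [he]
    nlinarith [this]

end Numeric

section Spectral

variable {E : Type*} [NormedAddCommGroup E] [InnerProductSpace ℂ E] [CompleteSpace E]

lemma aux_nontriv_alg [Nontrivial E] : Nontrivial (E →L[ℂ] E) := by
  obtain ⟨x, hx⟩ := exists_ne (0 : E)
  exact ⟨1, 0, fun h => hx (by simpa using congrFun (congrArg DFunLike.coe h) x)⟩

lemma aux_le_sInf_spectrum_iff [Nontrivial E] {T : E →L[ℂ] E} (hT : IsSelfAdjoint T) (c : ℝ) :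
    c ≤ sInf (spectrum ℝ T) ↔ ∀ x : E, c * ‖x‖ ^ 2 ≤ re ⟪T x, x⟫_ℂ := by
  have := aux_nontriv_alg (E := E)
  have hne : (spectrum ℝ T).Nonempty := hT.spectrum_nonempty
  have hbd : BddBelow (spectrum ℝ T) := (spectrum.isBounded T).bddBelow
  have hsa : IsSelfAdjoint (T - algebraMap ℝ (E →L[ℂ] E) c) :=
    hT.sub (IsSelfAdjoint.algebraMap _ (isSelfAdjoint_iff.mpr rfl))
  rw [le_csInf_iff hbd hne]
  have h1 : (∀ b ∈ spectrum ℝ T, c ≤ b)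
      ↔ ∀ μ ∈ spectrum ℝ (T - algebraMap ℝ (E →L[ℂ] E) c), 0 ≤ μ := by
    rw [← spectrum.sub_singleton_eq]
    constructor
    · rintro h μ ⟨b, hb, r, hr, rfl⟩
      simp only [Set.mem_singleton_iff] at hr
      subst hr; simpa using h b hb
    · intro h b hb
      have := h (b - c) ⟨b, hb, c, rfl, rfl⟩
      linarith
  rw [h1, ← StarOrderedRing.nonneg_iff_spectrum_nonneg _ hsa, nonneg_iff_isPositive]
  unfold IsPositive
  rw [and_iff_right (isSelfAdjoint_iff_isSymmetric.mp hsa)]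
  have key : ∀ x : E, (T - algebraMap ℝ (E →L[ℂ] E) c).reApplyInnerSelf x
      = re ⟪T x, x⟫_ℂ - c * ‖x‖ ^ 2 := by
    intro x
    rw [reApplyInnerSelf_apply]
    have : (T - algebraMap ℝ (E →L[ℂ] E) c) x = T x - (c : ℂ) • x := by
      simp [Algebra.algebraMap_eq_smul_one, sub_apply]
    rw [this, inner_sub_left, inner_smul_left, map_sub]
    simp [conj_ofReal, inner_self_eq_norm_sq, mul_comm]
    left; rw [← Complex.ofReal_pow, Complex.ofReal_re]
  constructor
  · intro h x; have := h x; rw [key] at this; linarith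
  · intro h x; rw [key]; have := h x; linarith

lemma aux_spectrum_empty_of_subsingleton [Subsingleton E] (T : E →L[ℂ] E) :
    spectrum ℝ T = ∅ := by
  have : Subsingleton (E →L[ℂ] E) := ⟨fun f g => by ext x; simp [Subsingleton.elim x 0]⟩
  rw [Set.eq_empty_iff_forall_notMem]
  intro x hx
  exact (spectrum.mem_iff.mp hx) (isUnit_of_subsingleton _)

end Spectral

theorem aux_inf_half
    {H : Type*} [NormedAddCommGroup H] [InnerProductSpace ℂ H] [CompleteSpace H]
    (A V B P : H →L[ℂ] H) (hA : IsSelfAdjoint A) (hV : IsSelfAdjoint V) (hB : B = A + V)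
    (hP : IsSelfAdjoint P) (hP2 : P * P = P) (hAP : Commute A P)
    (hoff₁ : P * V * P = 0) (hoff₂ : (1 - P) * V * (1 - P) = 0)
    (A₀ : ↥(LinearMap.range (P : H →ₗ[ℂ] H)) →L[ℂ] ↥(LinearMap.range (P : H →ₗ[ℂ] H)))
    (hA₀ : ∀ x : ↥(LinearMap.range (P : H →ₗ[ℂ] H)), (A₀ x : H) = A x)
    (A₁ : ↥(LinearMap.range ((1 - P : H →L[ℂ] H) : H →ₗ[ℂ] H)) →L[ℂ] ↥(LinearMap.range ((1 - P : H →L[ℂ] H) : H →ₗ[ℂ] H)))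
    (hA₁ : ∀ x : ↥(LinearMap.range ((1 - P : H →L[ℂ] H) : H →ₗ[ℂ] H)), (A₁ x : H) = A x)
    (δℓ : ℝ)
    (hδℓ : δℓ = if sInf (spectrum ℝ A₁) = sInf (spectrum ℝ A₀) then ‖V‖
      else ‖V‖ * Real.tan (Real.arctan
        (2 * ‖V‖ / |sInf (spectrum ℝ A₁) - sInf (spectrum ℝ A₀)|) / 2)) :
    sInf (spectrum ℝ A) - δℓ ≤ sInf (spectrum ℝ B) ∧
      sInf (spectrum ℝ B) ≤ sInf (spectrum ℝ A) := by
  classical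
  set m0 := sInf (spectrum ℝ A₀) with hm0_def
  set m1 := sInf (spectrum ℝ A₁) with hm1_def
  have hδ_closed : δℓ = Real.sqrt ((|m1 - m0| / 2) ^ 2 + ‖V‖ ^ 2) - |m1 - m0| / 2 :=
    aux_delta_closed ‖V‖ m0 m1 δℓ (norm_nonneg V) hδℓ
  have hδ_nonneg : 0 ≤ δℓ := by
    rw [hδ_closed]
    have h := Real.sqrt_le_sqrt (le_add_of_nonneg_right (sq_nonneg ‖V‖) :
      (|m1 - m0| / 2) ^ 2 ≤ (|m1 - m0| / 2) ^ 2 + ‖V‖ ^ 2)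
    rw [Real.sqrt_sq (by positivity)] at h
    linarith
  rcases subsingleton_or_nontrivial H with hsub | hnt
  · rw [aux_spectrum_empty_of_subsingleton A, aux_spectrum_empty_of_subsingleton B,
      Real.sInf_empty]
    constructor <;> linarith
  by_cases hP0 : P = 0
  · have hV0 : V = 0 := by have h := hoff₂; rw [hP0] at h; simpa using h
    rw [hB, hV0, add_zero]
    constructor <;> linarith
  by_cases hP1 : P = 1
  · have hV0 : V = 0 := by have h := hoff₁; rw [hP1] at h; simpa using h
    rw [hB, hV0, add_zero]
    constructor <;> linarith
  -- nondegenerate case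
  have hBsa : IsSelfAdjoint B := hB ▸ hA.add hV
  have hsymA : ∀ x y : H, ⟪A x, y⟫_ℂ = ⟪x, A y⟫_ℂ :=
    fun x y => (isSelfAdjoint_iff_isSymmetric.mp hA) x y
  have hsymV : ∀ x y : H, ⟪V x, y⟫_ℂ = ⟪x, V y⟫_ℂ :=
    fun x y => (isSelfAdjoint_iff_isSymmetric.mp hV) x y
  have hsymP : ∀ x y : H, ⟪P x, y⟫_ℂ = ⟪x, P y⟫_ℂ :=
    fun x y => (isSelfAdjoint_iff_isSymmetric.mp hP) x y
  have hPP : ∀ x : H, P (P x) = P x := fun x => by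
    simpa [ContinuousLinearMap.mul_apply] using DFunLike.congr_fun hP2 x
  have hQ2 : (1 - P) * (1 - P) = 1 - P := by
    rw [sub_mul, mul_sub, mul_sub, hP2]; simp
  have hQQ : ∀ x : H, (1 - P) ((1 - P) x) = (1 - P) x := fun x => by
    simpa [ContinuousLinearMap.mul_apply] using DFunLike.congr_fun hQ2 x
  have hmemP : ∀ x : H, x ∈ LinearMap.range (P : H →ₗ[ℂ] H) ↔ P x = x := by
    intro x
    constructor
    · rintro ⟨y, rfl⟩; exact hPP y
    · intro h; exact ⟨x, h⟩
  have hmemQ : ∀ x : H, x ∈ LinearMap.range ((1 - P : H →L[ℂ] H) : H →ₗ[ℂ] H) ↔ (1 - P) x = x := by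
    intro x
    constructor
    · rintro ⟨y, rfl⟩; exact hQQ y
    · intro h; exact ⟨x, h⟩
  -- P applied to elements of range (1 - P) is 0
  have hPQ : ∀ x : H, x ∈ LinearMap.range ((1 - P : H →L[ℂ] H) : H →ₗ[ℂ] H) → P x = 0 := by
    intro x hx
    rw [hmemQ] at hx
    have : P ((1 - P) x) = 0 := by
      simp only [ContinuousLinearMap.sub_apply, ContinuousLinearMap.one_apply, map_sub]
      rw [hPP]
      simp
    rwa [hx] at this
  -- completeness of the ranges
  have hclP : IsClosed ((LinearMap.range (P : H →ₗ[ℂ] H) : Submodule ℂ H) : Set H) := by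
    have he : (LinearMap.range (P : H →ₗ[ℂ] H) : Submodule ℂ H) = LinearMap.ker ((1 - P : H →L[ℂ] H) : H →ₗ[ℂ] H) := by
      ext x
      rw [hmemP x, LinearMap.mem_ker]
      constructor
      · intro h
        simp only [ContinuousLinearMap.coe_coe, ContinuousLinearMap.sub_apply, ContinuousLinearMap.one_apply, h, sub_self]
      · intro h
        have h2 : x - P x = 0 := by
          simpa [ContinuousLinearMap.sub_apply] using h
        have := sub_eq_zero.mp h2
        exact this.symm
    rw [he]
    exact ContinuousLinearMap.isClosed_ker (1 - P)
  have hclQ : IsClosed ((LinearMap.range ((1 - P : H →L[ℂ] H) : H →ₗ[ℂ] H) : Submodule ℂ H) : Set H) := by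
    have he : (LinearMap.range ((1 - P : H →L[ℂ] H) : H →ₗ[ℂ] H) : Submodule ℂ H) = LinearMap.ker (P : H →ₗ[ℂ] H) := by
      ext x
      rw [hmemQ x, LinearMap.mem_ker]
      constructor
      · intro h
        have := hPQ x ((hmemQ x).mpr h)
        exact this
      · intro h
        rw [ContinuousLinearMap.coe_coe] at h
        simp only [ContinuousLinearMap.coe_coe, ContinuousLinearMap.sub_apply, ContinuousLinearMap.one_apply, h, sub_zero]
    rw [he]
    exact ContinuousLinearMap.isClosed_ker P
  haveI : CompleteSpace ↥(LinearMap.range (P : H →ₗ[ℂ] H)) := hclP.completeSpace_coe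
  haveI : CompleteSpace ↥(LinearMap.range ((1 - P : H →L[ℂ] H) : H →ₗ[ℂ] H)) := hclQ.completeSpace_coe
  -- nontriviality of the ranges
  haveI : Nontrivial ↥(LinearMap.range (P : H →ₗ[ℂ] H)) := by
    rw [Submodule.nontrivial_iff_ne_bot]
    intro hbot
    apply hP0
    ext x
    have : P x ∈ LinearMap.range (P : H →ₗ[ℂ] H) := ⟨x, rfl⟩
    rw [hbot] at this
    simpa using this
  haveI : Nontrivial ↥(LinearMap.range ((1 - P : H →L[ℂ] H) : H →ₗ[ℂ] H)) := by
    rw [Submodule.nontrivial_iff_ne_bot]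
    intro hbot
    apply hP1
    have h0 : ∀ x : H, (1 - P) x = 0 := by
      intro x
      have : (1 - P) x ∈ LinearMap.range ((1 - P : H →L[ℂ] H) : H →ₗ[ℂ] H) := ⟨x, rfl⟩
      rw [hbot] at this
      simpa using this
    ext x
    have := h0 x
    simp only [ContinuousLinearMap.sub_apply, ContinuousLinearMap.one_apply] at this
    simpa using (sub_eq_zero.mp this).symm
  -- self-adjointness of the parts
  have hA₀sa : IsSelfAdjoint A₀ := by
    rw [isSelfAdjoint_iff_isSymmetric]
    intro x y
    rw [Submodule.coe_inner, Submodule.coe_inner]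
    show ⟪(A₀ x : H), (y : H)⟫_ℂ = ⟪(x : H), (A₀ y : H)⟫_ℂ
    rw [hA₀ x, hA₀ y]
    exact hsymA _ _
  have hA₁sa : IsSelfAdjoint A₁ := by
    rw [isSelfAdjoint_iff_isSymmetric]
    intro x y
    rw [Submodule.coe_inner, Submodule.coe_inner]
    show ⟪(A₁ x : H), (y : H)⟫_ℂ = ⟪(x : H), (A₁ y : H)⟫_ℂ
    rw [hA₁ x, hA₁ y]
    exact hsymA _ _
  -- quadratic form of V vanishes on the two subspaces
  have hVP : ∀ x : H, x ∈ LinearMap.range (P : H →ₗ[ℂ] H) → ⟪V x, x⟫_ℂ = 0 := by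
    intro x hx
    rw [hmemP] at hx
    calc ⟪V x, x⟫_ℂ = ⟪V (P x), P x⟫_ℂ := by rw [hx]
    _ = ⟪P (V (P x)), x⟫_ℂ := by rw [← hsymP]
    _ = ⟪(P * V * P) x, x⟫_ℂ := by rfl
    _ = 0 := by rw [hoff₁]; simp
  have hVQ : ∀ x : H, x ∈ LinearMap.range ((1 - P : H →L[ℂ] H) : H →ₗ[ℂ] H) → ⟪V x, x⟫_ℂ = 0 := by
    intro x hx
    rw [hmemQ] at hx
    calc ⟪V x, x⟫_ℂ = ⟪V ((1 - P) x), (1 - P) x⟫_ℂ := by rw [hx]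
    _ = ⟪(1 - P) (V ((1 - P) x)), x⟫_ℂ := by
        have hQsa : IsSelfAdjoint (1 - P) := (IsSelfAdjoint.one (R := H →L[ℂ] H)).sub hP
        exact ((isSelfAdjoint_iff_isSymmetric.mp hQsa) (V ((1 - P) x)) x).symm
    _ = ⟪((1 - P) * V * (1 - P)) x, x⟫_ℂ := by rfl
    _ = 0 := by rw [hoff₂]; simp
  -- upper bounds on sInf via test vectors in the subspaces
  have main_le0 : ∀ (T : H →L[ℂ] H), IsSelfAdjoint T →
      (∀ x : H, x ∈ LinearMap.range (P : H →ₗ[ℂ] H) → ⟪T x, x⟫_ℂ = ⟪A x, x⟫_ℂ) →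
      sInf (spectrum ℝ T) ≤ m0 := by
    intro T hT hTA
    refine (aux_le_sInf_spectrum_iff hA₀sa _).mpr ?_
    intro x
    have h := (aux_le_sInf_spectrum_iff hT _).mp le_rfl (x : H)
    have hc : ⟪A₀ x, x⟫_ℂ = ⟪T (x : H), (x : H)⟫_ℂ := by
      rw [Submodule.coe_inner]
      show ⟪(A₀ x : H), (x : H)⟫_ℂ = _
      rw [hA₀ x, hTA (x : H) x.2]
    rw [hc]
    exact h
  have main_le1 : ∀ (T : H →L[ℂ] H), IsSelfAdjoint T →
      (∀ x : H, x ∈ LinearMap.range ((1 - P : H →L[ℂ] H) : H →ₗ[ℂ] H) → ⟪T x, x⟫_ℂ = ⟪A x, x⟫_ℂ) →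
      sInf (spectrum ℝ T) ≤ m1 := by
    intro T hT hTA
    refine (aux_le_sInf_spectrum_iff hA₁sa _).mpr ?_
    intro x
    have h := (aux_le_sInf_spectrum_iff hT _).mp le_rfl (x : H)
    have hc : ⟪A₁ x, x⟫_ℂ = ⟪T (x : H), (x : H)⟫_ℂ := by
      rw [Submodule.coe_inner]
      show ⟪(A₁ x : H), (x : H)⟫_ℂ = _
      rw [hA₁ x, hTA (x : H) x.2]
    rw [hc]
    exact h
  have hBA_formP : ∀ x : H, x ∈ LinearMap.range (P : H →ₗ[ℂ] H) → ⟪B x, x⟫_ℂ = ⟪A x, x⟫_ℂ := by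
    intro x hx
    rw [hB]
    simp only [ContinuousLinearMap.add_apply, inner_add_left]
    rw [hVP x hx, add_zero]
  have hBA_formQ : ∀ x : H, x ∈ LinearMap.range ((1 - P : H →L[ℂ] H) : H →ₗ[ℂ] H) → ⟪B x, x⟫_ℂ = ⟪A x, x⟫_ℂ := by
    intro x hx
    rw [hB]
    simp only [ContinuousLinearMap.add_apply, inner_add_left]
    rw [hVQ x hx, add_zero]
  have hB_le_m0 : sInf (spectrum ℝ B) ≤ m0 := main_le0 B hBsa hBA_formP
  have hB_le_m1 : sInf (spectrum ℝ B) ≤ m1 := main_le1 B hBsa hBA_formQ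
  have hA_le_m0 : sInf (spectrum ℝ A) ≤ m0 := main_le0 A hA (fun _ _ => rfl)
  have hA_le_m1 : sInf (spectrum ℝ A) ≤ m1 := main_le1 A hA (fun _ _ => rfl)
  -- decomposition lower bounds
  have hlow : ∀ x : H,
      (min m0 m1) * ‖x‖ ^ 2 ≤ re ⟪A x, x⟫_ℂ ∧
      (min m0 m1 - δℓ) * ‖x‖ ^ 2 ≤ re ⟪B x, x⟫_ℂ := by
    intro x
    set p := P x with hp_def
    set q := x - P x with hq_def
    have hpmem : p ∈ LinearMap.range (P : H →ₗ[ℂ] H) := ⟨x, rfl⟩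
    have hqmem : q ∈ LinearMap.range ((1 - P : H →L[ℂ] H) : H →ₗ[ℂ] H) := ⟨x, by
      simp only [ContinuousLinearMap.coe_coe, ContinuousLinearMap.sub_apply, ContinuousLinearMap.one_apply, hq_def]⟩
    have hPq : P q = 0 := hPQ q hqmem
    have hx_eq : x = p + q := by rw [hp_def, hq_def]; abel
    have hpq : ⟪p, q⟫_ℂ = 0 := by
      rw [hp_def, hsymP, hPq, inner_zero_right]
    have hnorm : ‖x‖ ^ 2 = ‖p‖ ^ 2 + ‖q‖ ^ 2 := by
      conv_lhs => rw [hx_eq]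
      rw [norm_add_sq (𝕜 := ℂ), hpq]
      simp
    have hApP : A p = P (A x) := by
      have h := DFunLike.congr_fun hAP x
      simpa [ContinuousLinearMap.mul_apply] using h
    have hAp_q : ⟪A p, q⟫_ℂ = 0 := by
      rw [hApP, hsymP, hPq, inner_zero_right]
    have hAq_p : ⟪A q, p⟫_ℂ = 0 := by
      rw [hsymA, hApP, ← hsymP, hPq, inner_zero_left]
    have hAsplit : re ⟪A x, x⟫_ℂ = re ⟪A p, p⟫_ℂ + re ⟪A q, q⟫_ℂ := by
      conv_lhs => rw [hx_eq]
      rw [map_add, inner_add_left, inner_add_right, inner_add_right, hAp_q, hAq_p]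
      simp
    have hAp : m0 * ‖p‖ ^ 2 ≤ re ⟪A p, p⟫_ℂ := by
      have h := (aux_le_sInf_spectrum_iff hA₀sa m0).mp le_rfl ⟨p, hpmem⟩
      have hc : ⟪A₀ ⟨p, hpmem⟩, (⟨p, hpmem⟩ : ↥(LinearMap.range (P : H →ₗ[ℂ] H)))⟫_ℂ = ⟪A p, p⟫_ℂ := by
        rw [Submodule.coe_inner]
        show ⟪(A₀ ⟨p, hpmem⟩ : H), p⟫_ℂ = _
        rw [hA₀]
      rw [hc] at h
      exact h
    have hAq : m1 * ‖q‖ ^ 2 ≤ re ⟪A q, q⟫_ℂ := by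
      have h := (aux_le_sInf_spectrum_iff hA₁sa m1).mp le_rfl ⟨q, hqmem⟩
      have hc : ⟪A₁ ⟨q, hqmem⟩, (⟨q, hqmem⟩ : ↥(LinearMap.range ((1 - P : H →L[ℂ] H) : H →ₗ[ℂ] H)))⟫_ℂ = ⟪A q, q⟫_ℂ := by
        rw [Submodule.coe_inner]
        show ⟪(A₁ ⟨q, hqmem⟩ : H), q⟫_ℂ = _
        rw [hA₁]
      rw [hc] at h
      exact h
    have hVbound : -(2 * ‖V‖ * ‖p‖ * ‖q‖) ≤ re ⟪V x, x⟫_ℂ := by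
      have hVx : ⟪V x, x⟫_ℂ = ⟪V p, q⟫_ℂ + ⟪V q, p⟫_ℂ := by
        conv_lhs => rw [hx_eq]
        rw [map_add, inner_add_left, inner_add_right, inner_add_right,
          hVP p hpmem, hVQ q hqmem]
        ring
      have hconj : ⟪V q, p⟫_ℂ = starRingEnd ℂ ⟪V p, q⟫_ℂ := by
        rw [hsymV q p]
        exact (inner_conj_symm q (V p)).symm
      have hre : re ⟪V x, x⟫_ℂ = 2 * re ⟪V p, q⟫_ℂ := by
        rw [hVx, hconj, map_add, conj_re]
        ring
      have h1 : |re ⟪V p, q⟫_ℂ| ≤ ‖⟪V p, q⟫_ℂ‖ := abs_re_le_norm _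
      have h2 : ‖⟪V p, q⟫_ℂ‖ ≤ ‖V p‖ * ‖q‖ := norm_inner_le_norm _ _
      have h3 : ‖V p‖ ≤ ‖V‖ * ‖p‖ := le_opNorm V p
      have h4 : ‖V p‖ * ‖q‖ ≤ ‖V‖ * ‖p‖ * ‖q‖ :=
        mul_le_mul_of_nonneg_right h3 (norm_nonneg q)
      rw [hre]
      have h5 : -(‖V‖ * ‖p‖ * ‖q‖) ≤ re ⟪V p, q⟫_ℂ := by
        have := abs_le.mp (h1.trans (h2.trans h4))
        linarith [this.1]
      linarith
    constructor
    · rw [hAsplit, hnorm]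
      have h1 : min m0 m1 * ‖p‖ ^ 2 ≤ m0 * ‖p‖ ^ 2 :=
        mul_le_mul_of_nonneg_right (min_le_left m0 m1) (sq_nonneg _)
      have h2 : min m0 m1 * ‖q‖ ^ 2 ≤ m1 * ‖q‖ ^ 2 :=
        mul_le_mul_of_nonneg_right (min_le_right m0 m1) (sq_nonneg _)
      nlinarith
    · have hBx : re ⟪B x, x⟫_ℂ = re ⟪A x, x⟫_ℂ + re ⟪V x, x⟫_ℂ := by
        rw [hB]
        simp only [ContinuousLinearMap.add_apply, inner_add_left, map_add]
      have hquad := aux_quad_bound m0 m1 ‖V‖ ‖p‖ ‖q‖ (norm_nonneg V) (norm_nonneg p)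
        (norm_nonneg q)
      rw [hBx, hAsplit, hnorm, hδ_closed]
      nlinarith
  have hminA : min m0 m1 ≤ sInf (spectrum ℝ A) :=
    (aux_le_sInf_spectrum_iff hA _).mpr (fun x => (hlow x).1)
  have hlowB : min m0 m1 - δℓ ≤ sInf (spectrum ℝ B) :=
    (aux_le_sInf_spectrum_iff hBsa _).mpr (fun x => (hlow x).2)
  constructor
  · have h := le_min hA_le_m0 hA_le_m1
    linarith
  · have h := le_min hB_le_m0 hB_le_m1
    linarith

lemma aux_sInf_neg_spectrum {E : Type*} [NormedAddCommGroup E] [InnerProductSpace ℂ E]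
    (T : E →L[ℂ] E) : sInf (spectrum ℝ (-T)) = -sSup (spectrum ℝ T) := by
  rw [← spectrum.neg_eq, Real.sInf_def, neg_neg]

/-- **Lemma 1.1.** Let `A` and `V` be bounded self-adjoint operators on a Hilbert space `H`,
`B = A + V`, and `P` an orthogonal projection commuting with `A` such that `V` is
off-diagonal with respect to `H = Ran P ⊕ Ran (1 − P)`. If `A₀` and `A₁` denote the parts of
`A` in the invariant subspaces `Ran P` and `Ran (1 − P)` respectively, then
`inf A − δ_V^ℓ ≤ inf B ≤ inf A` and `sup A ≤ sup B ≤ sup A + δ_V^r`, where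
`δ_V^ℓ = ‖V‖ tan((1/2) arctan(2‖V‖/|inf A₁ − inf A₀|))` and
`δ_V^r = ‖V‖ tan((1/2) arctan(2‖V‖/|sup A₁ − sup A₀|))`, with the convention
`arctan (+∞) = π/2` (so that `δ = ‖V‖`) when the corresponding denominator vanishes. -/
theorem inf_sup_spectrum_bounds_offdiagonal
    {H : Type*} [NormedAddCommGroup H] [InnerProductSpace ℂ H] [CompleteSpace H]
    (A V B P : H →L[ℂ] H) (hA : IsSelfAdjoint A) (hV : IsSelfAdjoint V) (hB : B = A + V)
    (hP : IsSelfAdjoint P) (hP2 : P * P = P) (hAP : Commute A P)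
    (hoff₁ : P * V * P = 0) (hoff₂ : (1 - P) * V * (1 - P) = 0)
    (A₀ : ↥(LinearMap.range (P : H →ₗ[ℂ] H)) →L[ℂ] ↥(LinearMap.range (P : H →ₗ[ℂ] H)))
    (hA₀ : ∀ x : ↥(LinearMap.range (P : H →ₗ[ℂ] H)), (A₀ x : H) = A x)
    (A₁ : ↥(LinearMap.range ((1 - P : H →L[ℂ] H) : H →ₗ[ℂ] H)) →L[ℂ] ↥(LinearMap.range ((1 - P : H →L[ℂ] H) : H →ₗ[ℂ] H)))
    (hA₁ : ∀ x : ↥(LinearMap.range ((1 - P : H →L[ℂ] H) : H →ₗ[ℂ] H)), (A₁ x : H) = A x)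
    (δℓ δr : ℝ)
    (hδℓ : δℓ = if sInf (spectrum ℝ A₁) = sInf (spectrum ℝ A₀) then ‖V‖
      else ‖V‖ * Real.tan (Real.arctan
        (2 * ‖V‖ / |sInf (spectrum ℝ A₁) - sInf (spectrum ℝ A₀)|) / 2))
    (hδr : δr = if sSup (spectrum ℝ A₁) = sSup (spectrum ℝ A₀) then ‖V‖
      else ‖V‖ * Real.tan (Real.arctan
        (2 * ‖V‖ / |sSup (spectrum ℝ A₁) - sSup (spectrum ℝ A₀)|) / 2)) :
    (sInf (spectrum ℝ A) - δℓ ≤ sInf (spectrum ℝ B) ∧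
      sInf (spectrum ℝ B) ≤ sInf (spectrum ℝ A)) ∧
    (sSup (spectrum ℝ A) ≤ sSup (spectrum ℝ B) ∧
      sSup (spectrum ℝ B) ≤ sSup (spectrum ℝ A) + δr) := by
  have hinf := aux_inf_half A V B P hA hV hB hP hP2 hAP hoff₁ hoff₂ A₀ hA₀ A₁ hA₁ δℓ hδℓ
  refine ⟨hinf, ?_⟩
  -- negate everything to get the sup bounds from the inf bounds
  have hA₀' : ∀ x : ↥(LinearMap.range (P : H →ₗ[ℂ] H)), (((-A₀) x : ↥(LinearMap.range (P : H →ₗ[ℂ] H))) : H) = (-A) x := by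
    intro x
    have h := hA₀ x
    show (((-A₀) x : ↥(LinearMap.range (P : H →ₗ[ℂ] H))) : H) = (-A) (x : H)
    calc (((-A₀) x : ↥(LinearMap.range (P : H →ₗ[ℂ] H))) : H) = ((-(A₀ x) : ↥(LinearMap.range (P : H →ₗ[ℂ] H))) : H) := by
          rw [ContinuousLinearMap.neg_apply]
    _ = -((A₀ x : ↥(LinearMap.range (P : H →ₗ[ℂ] H))) : H) := by push_cast; ring
    _ = -(A (x : H)) := by rw [h]
    _ = (-A) (x : H) := by rw [ContinuousLinearMap.neg_apply]
  have hA₁' : ∀ x : ↥(LinearMap.range ((1 - P : H →L[ℂ] H) : H →ₗ[ℂ] H)),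
      (((-A₁) x : ↥(LinearMap.range ((1 - P : H →L[ℂ] H) : H →ₗ[ℂ] H))) : H) = (-A) x := by
    intro x
    have h := hA₁ x
    calc (((-A₁) x : ↥(LinearMap.range ((1 - P : H →L[ℂ] H) : H →ₗ[ℂ] H))) : H)
        = ((-(A₁ x) : ↥(LinearMap.range ((1 - P : H →L[ℂ] H) : H →ₗ[ℂ] H))) : H) := by
          rw [ContinuousLinearMap.neg_apply]
    _ = -((A₁ x : ↥(LinearMap.range ((1 - P : H →L[ℂ] H) : H →ₗ[ℂ] H))) : H) := by rfl
    _ = -(A (x : H)) := by rw [h]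
    _ = (-A) (x : H) := by rw [ContinuousLinearMap.neg_apply]
  have hδr' : δr = if sInf (spectrum ℝ (-A₁)) = sInf (spectrum ℝ (-A₀)) then ‖-V‖
      else ‖-V‖ * Real.tan (Real.arctan
        (2 * ‖-V‖ / |sInf (spectrum ℝ (-A₁)) - sInf (spectrum ℝ (-A₀))|) / 2) := by
    rw [aux_sInf_neg_spectrum A₁, aux_sInf_neg_spectrum A₀, norm_neg]
    have hcond : (-sSup (spectrum ℝ A₁) = -sSup (spectrum ℝ A₀))
        ↔ (sSup (spectrum ℝ A₁) = sSup (spectrum ℝ A₀)) := neg_inj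
    have habs : |-sSup (spectrum ℝ A₁) - -sSup (spectrum ℝ A₀)|
        = |sSup (spectrum ℝ A₁) - sSup (spectrum ℝ A₀)| := by
      rw [show -sSup (spectrum ℝ A₁) - -sSup (spectrum ℝ A₀)
        = -(sSup (spectrum ℝ A₁) - sSup (spectrum ℝ A₀)) by ring, abs_neg]
    rw [habs]
    by_cases hc : sSup (spectrum ℝ A₁) = sSup (spectrum ℝ A₀)
    · rw [if_pos (hcond.mpr hc), hδr, if_pos hc]
    · rw [if_neg (fun h => hc (hcond.mp h)), hδr, if_neg hc]
  have hsup := aux_inf_half (-A) (-V) (-B) P hA.neg hV.neg (by rw [hB, neg_add]) hP hP2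
    hAP.neg_left (by rw [mul_neg, neg_mul, hoff₁, neg_zero])
    (by rw [mul_neg, neg_mul, hoff₂, neg_zero]) (-A₀) hA₀' (-A₁) hA₁' δr hδr'
  rw [aux_sInf_neg_spectrum A, aux_sInf_neg_spectrum B] at hsup
  constructor
  · linarith [hsup.2]
  · linarith [hsup.1]
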